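/- For complex z and w with Re(z - w) > 0, the series Σ_{n=0}^{∞} (w)_n / ((z)_{n+1}) converges to 1/(z-w), where (w)_n and (z)_{n+1} are Pochhammer symbols (Waring's formula). -/

import Mathlib

open Filter

noncomputable def poch (z : ℂ) (m : ℕ) : ℂ := ∏ i ∈ Finset.range m, (z + i)

lemma poch_ne_zero {z : ℂ} (hz : ∀ m : ℕ, z + m ≠ 0) (n : ℕ) : poch z n ≠ 0 :=
  Finset.prod_ne_zero_iff.mpr fun i _ => hz i

lemma poch_telescope (z w : ℂ) (hzw : z - w ≠ 0) (hz : ∀ m : ℕ, z + m ≠ 0) (N : ℕ) :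
    ∑ n ∈ Finset.range N, poch w n / poch z (n + 1)
      = (1 - poch w N / poch z N) / (z - w) := by
  induction N with
  | zero => simp [poch]
  | succ N ih =>
    rw [Finset.sum_range_succ, ih]
    have hN : poch z N ≠ 0 := poch_ne_zero hz N
    have e1 : poch z (N + 1) = poch z N * (z + N) := by
      simp [poch, Finset.prod_range_succ]
    have e2 : poch w (N + 1) = poch w N * (w + N) := by
      simp [poch, Finset.prod_range_succ]
    rw [e1, e2]
    have hzN : (z : ℂ) + N ≠ 0 := hz N
    field_simp
    ring

lemma cpow_sub_tendsto_zero (u : ℂ) (hu : u.re < 0) :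
    Tendsto (fun n : ℕ => (n : ℂ) ^ u) atTop (nhds 0) := by
  rw [tendsto_zero_iff_norm_tendsto_zero]
  have h1 : Tendsto (fun x : ℝ => x ^ (-(-u.re))) atTop (nhds 0) := by
    simpa using tendsto_rpow_neg_atTop (by linarith : (0:ℝ) < -u.re)
  have h2 : Tendsto (fun n : ℕ => ((n : ℝ)) ^ u.re) atTop (nhds 0) := by
    simpa [Function.comp_def] using h1.comp tendsto_natCast_atTop_atTop
  apply h2.congr'
  filter_upwards [eventually_ge_atTop 1] with n hn
  have hp : (0:ℝ) < (n:ℝ) := by exact_mod_cast Nat.pos_of_ne_zero (by omega)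
  rw [show ((n:ℂ)) = (((n:ℝ)):ℂ) by push_cast; ring,
    Complex.norm_cpow_eq_rpow_re_of_pos hp]

lemma ratio_tendsto_zero (z w : ℂ) (h : 0 < (z - w).re) (hz : ∀ m : ℕ, z + m ≠ 0) :
    Tendsto (fun N => poch w N / poch z N) atTop (nhds 0) := by
  by_cases hw : ∃ k : ℕ, w + k = 0
  · obtain ⟨k, hk⟩ := hw
    refine Tendsto.congr' ?_ tendsto_const_nhds
    filter_upwards [eventually_ge_atTop (k + 1)] with N hN
    have : poch w N = 0 :=
      Finset.prod_eq_zero (Finset.mem_range.mpr (by omega)) hk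
    simp [this]
  · push_neg at hw
    have hGw : Complex.Gamma w ≠ 0 := by
      apply Complex.Gamma_ne_zero
      intro m hm
      exact hw m (by rw [hm]; ring)
    rw [← tendsto_add_atTop_iff_nat 1]
    have hdiv : Tendsto (fun n => Complex.GammaSeq z n / Complex.GammaSeq w n) atTop
        (nhds (Complex.Gamma z / Complex.Gamma w)) :=
      (Complex.GammaSeq_tendsto_Gamma z).div (Complex.GammaSeq_tendsto_Gamma w) hGw
    have hpow : Tendsto (fun n : ℕ => (n : ℂ) ^ (w - z)) atTop (nhds 0) := by
      apply cpow_sub_tendsto_zero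
      simp only [Complex.sub_re]
      have := Complex.sub_re z w
      linarith [h, (by rw [Complex.sub_re] : (z - w).re = z.re - w.re)]
    have hmul := hpow.mul hdiv
    rw [zero_mul] at hmul
    apply hmul.congr'
    filter_upwards [eventually_ge_atTop 1] with n hn
    have hn0 : (n : ℂ) ≠ 0 := Nat.cast_ne_zero.mpr (by omega)
    have hzn : poch z (n + 1) ≠ 0 := poch_ne_zero hz (n + 1)
    have hwn : poch w (n + 1) ≠ 0 := Finset.prod_ne_zero_iff.mpr fun i _ => hw i
    have hfz : ((n : ℂ) ^ z) ≠ 0 := by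
      intro e
      rcases (Complex.cpow_eq_zero_iff _ _).mp e with ⟨e1, _⟩
      exact hn0 e1
    have hfw : ((n : ℂ) ^ w) ≠ 0 := by
      intro e
      rcases (Complex.cpow_eq_zero_iff _ _).mp e with ⟨e1, _⟩
      exact hn0 e1
    have hfact : ((n.factorial : ℂ)) ≠ 0 := Nat.cast_ne_zero.mpr (Nat.factorial_ne_zero n)
    have hc : (n : ℂ) ^ (w - z) * (n : ℂ) ^ z = (n : ℂ) ^ w := by
      rw [← Complex.cpow_add _ _ hn0, sub_add_cancel]
    have gz : Complex.GammaSeq z n = (n:ℂ) ^ z * n.factorial / poch z (n + 1) := rfl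
    have gw : Complex.GammaSeq w n = (n:ℂ) ^ w * n.factorial / poch w (n + 1) := rfl
    rw [gz, gw]
    field_simp
    rw [← hc]
  
theorem stmt14 (z w : ℂ) (h : 0 < (z - w).re) (hz : ∀ m : ℕ, z + m ≠ 0) :
    Tendsto (fun N => ∑ n ∈ Finset.range N, poch w n / poch z (n + 1))
      atTop (nhds (1 / (z - w))) := by
  have hzw : z - w ≠ 0 := fun e => by simp [e] at h
  have hr := ratio_tendsto_zero z w h hz
  have key : Tendsto (fun N => (1 - poch w N / poch z N) / (z - w)) atTop
      (nhds ((1 - 0) / (z - w))) := (tendsto_const_nhds.sub hr).div_const _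
  rw [sub_zero] at key
  exact key.congr fun N => (poch_telescope z w hzw hz N).symm
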